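/- In the weighted Ranking algorithm with g(y) = e^{y-1}: fix edge (u,v) ∈ E with marginal rank θ, and the ranks of all left vertices other than u. If y_u ∈ [θ, 1], then v is matched and its gain satisfies α_v ≥ (1 - g(θ))·w_{uv}. -/

import Mathlib

/-- Perturbed weight of a pair `(u, v)` under ranks `y`, with perturbation
function `g(t) = e^{t-1}`: namely `(1 - e^{y u - 1}) * w u v`. -/
noncomputable def perturbedWeight {L R : Type*} (w : L → R → ℝ) (y : L → ℝ) (p : L × R) : ℝ :=
  (1 - Real.exp (y p.1 - 1)) * w p.1 p.2

/-- One probing step: the pair `p` is added to the current matching `M` iff it is an edge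
and both of its endpoints are currently unmatched. -/
def probeStep {L R : Type*} [DecidableEq L] [DecidableEq R]
    (E : Finset (L × R)) (M : List (L × R)) (p : L × R) : List (L × R) :=
  if p ∈ E ∧ ∀ q ∈ M, q.1 ≠ p.1 ∧ q.2 ≠ p.2 then p :: M else M

/-- The matching produced by probing the pairs in the list `P` in order, starting from the
empty matching. -/
def greedyMatching {L R : Type*} [DecidableEq L] [DecidableEq R]
    (E : Finset (L × R)) (P : List (L × R)) : List (L × R) :=
  P.foldl (probeStep E) []

/-- `P` is a valid probing order for the weighted Ranking algorithm with ranks `y`: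
it lists every pair exactly once, in descending order of perturbed weight. -/
def IsProbeOrder {L R : Type*} [Fintype L] [Fintype R]
    (w : L → R → ℝ) (y : L → ℝ) (P : List (L × R)) : Prop :=
  P.Nodup ∧ (∀ p : L × R, p ∈ P) ∧
    P.Pairwise (fun p q => perturbedWeight w y q ≤ perturbedWeight w y p)

/-- The weight of the edge that `u` is matched to in the matching `M` (0 if unmatched). -/
noncomputable def matchedWeight {L R : Type*} [DecidableEq L] (w : L → R → ℝ)
    (M : List (L × R)) (u : L) : ℝ :=
  match M.find? (fun q => decide (q.1 = u)) with
  | some q => w q.1 q.2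
  | none => 0

/-- The gain `α_u` of a left vertex `u`: `g(y u) · w u v'` where `v'` is `u`'s partner in
`M` (0 if `u` is unmatched), with `g(t) = e^{t-1}`. -/
noncomputable def gainL {L R : Type*} [DecidableEq L] (w : L → R → ℝ) (y : L → ℝ)
    (M : List (L × R)) (u : L) : ℝ :=
  match M.find? (fun q => decide (q.1 = u)) with
  | some q => Real.exp (y u - 1) * w q.1 q.2
  | none => 0

/-- The gain `α_v` of a right vertex `v`: `(1 - g(y u')) · w u' v` where `u'` is `v`'s
partner in `M` (0 if `v` is unmatched), with `g(t) = e^{t-1}`. -/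
noncomputable def gainR {L R : Type*} [DecidableEq R] (w : L → R → ℝ) (y : L → ℝ)
    (M : List (L × R)) (v : R) : ℝ :=
  match M.find? (fun q => decide (q.2 = v)) with
  | some q => (1 - Real.exp (y q.1 - 1)) * w q.1 q.2
  | none => 0

/-! ### Auxiliary lemmas -/

section Aux

variable {L R : Type*} [DecidableEq L] [DecidableEq R]

lemma mem_probeStep (E : Finset (L × R)) {M : List (L × R)} {q : L × R} (p : L × R)
    (hq : q ∈ M) : q ∈ probeStep E M p := by
  unfold probeStep; split
  · exact List.mem_cons_of_mem _ hq
  · exact hq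

lemma probeStep_cases (E : Finset (L × R)) {M : List (L × R)} {q p : L × R}
    (hq : q ∈ probeStep E M p) : q = p ∨ q ∈ M := by
  unfold probeStep at hq; split at hq
  · exact List.mem_cons.mp hq
  · exact Or.inr hq

lemma probeStep_mem_self (E : Finset (L × R)) {M : List (L × R)} {p : L × R}
    (h : p ∈ E ∧ ∀ q ∈ M, q.1 ≠ p.1 ∧ q.2 ≠ p.2) : p ∈ probeStep E M p := by
  unfold probeStep
  rw [if_pos h]
  exact List.mem_cons_self

lemma mem_foldl_probe (E : Finset (L × R)) :
    ∀ (Q : List (L × R)) {M : List (L × R)} {q : L × R}, q ∈ M →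
      q ∈ Q.foldl (probeStep E) M := by
  intro Q
  induction Q with
  | nil => intro M q hq; exact hq
  | cons p Q ih => intro M q hq; exact ih (mem_probeStep E p hq)

lemma mem_of_mem_foldl (E : Finset (L × R)) :
    ∀ (Q : List (L × R)) {M : List (L × R)} {q : L × R},
      q ∈ Q.foldl (probeStep E) M → q ∈ M ∨ q ∈ Q := by
  intro Q
  induction Q with
  | nil => intro M q h; exact Or.inl h
  | cons p Q ih =>
    intro M q h
    rcases ih h with h' | h'
    · rcases probeStep_cases E h' with h'' | h''
      · exact Or.inr (by simp [h''])
      · exact Or.inl h''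
    · exact Or.inr (List.mem_cons_of_mem _ h')

lemma pairwise_foldl_probe (E : Finset (L × R)) :
    ∀ (Q : List (L × R)) {M : List (L × R)},
      M.Pairwise (fun a b => a.1 ≠ b.1 ∧ a.2 ≠ b.2) →
      (Q.foldl (probeStep E) M).Pairwise (fun a b => a.1 ≠ b.1 ∧ a.2 ≠ b.2) := by
  intro Q
  induction Q with
  | nil => intro M h; exact h
  | cons p Q ih =>
    intro M h
    apply ih
    unfold probeStep; split
    · rename_i hc
      exact List.pairwise_cons.mpr ⟨fun b hb => ⟨(hc.2 b hb).1.symm, (hc.2 b hb).2.symm⟩, h⟩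
    · exact h

lemma find?_fst_eq (u : L) :
    ∀ (M : List (L × R)), M.Pairwise (fun a b => a.1 ≠ b.1 ∧ a.2 ≠ b.2) →
      ∀ (q : L × R), q ∈ M → q.1 = u →
      M.find? (fun r => decide (r.1 = u)) = some q := by
  intro M
  induction M with
  | nil => intro _ q hq; cases hq
  | cons a M ih =>
    intro hpw q hq hqu
    by_cases ha : a.1 = u
    · rw [List.find?_cons_of_pos (p := fun (r : L × R) => decide (r.1 = u)) (by simp [ha])]
      rcases List.mem_cons.mp hq with rfl | hq'
      · rfl
      · have h1 : a.1 ≠ q.1 := ((List.pairwise_cons.mp hpw).1 q hq').1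
        exact absurd (hqu.trans ha.symm) (Ne.symm h1)
    · rw [List.find?_cons_of_neg (p := fun (r : L × R) => decide (r.1 = u)) (by simp [ha])]
      have hq' : q ∈ M := by
        rcases List.mem_cons.mp hq with rfl | h
        · exact absurd hqu ha
        · exact h
      exact ih (List.pairwise_cons.mp hpw).2 q hq' hqu

lemma find?_snd_eq (v : R) :
    ∀ (M : List (L × R)), M.Pairwise (fun a b => a.1 ≠ b.1 ∧ a.2 ≠ b.2) →
      ∀ (q : L × R), q ∈ M → q.2 = v →
      M.find? (fun r => decide (r.2 = v)) = some q := by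
  intro M
  induction M with
  | nil => intro _ q hq; cases hq
  | cons a M ih =>
    intro hpw q hq hqv
    by_cases ha : a.2 = v
    · rw [List.find?_cons_of_pos (p := fun (r : L × R) => decide (r.2 = v)) (by simp [ha])]
      rcases List.mem_cons.mp hq with rfl | hq'
      · rfl
      · have h1 : a.2 ≠ q.2 := ((List.pairwise_cons.mp hpw).1 q hq').2
        exact absurd (hqv.trans ha.symm) (Ne.symm h1)
    · rw [List.find?_cons_of_neg (p := fun (r : L × R) => decide (r.2 = v)) (by simp [ha])]
      have hq' : q ∈ M := by
        rcases List.mem_cons.mp hq with rfl | h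
        · exact absurd hqv ha
        · exact h
      exact ih (List.pairwise_cons.mp hpw).2 q hq' hqv

lemma foldl_probe_filter (E : Finset (L × R)) (u : L) :
    ∀ (Q : List (L × R)) (M : List (L × R)), (∀ q ∈ M, q.1 ≠ u) →
      Q.foldl (probeStep E) M
        = (Q.filter (fun p => decide (p.1 ≠ u))).foldl (probeStep E) M
      ∨ ∃ x : R, (u, x) ∈ Q ∧ (u, x) ∈ Q.foldl (probeStep E) M := by
  intro Q
  induction Q with
  | nil => intro M _; exact Or.inl rfl
  | cons p Q ih =>
    intro M hM
    by_cases hp : p.1 = u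
    · have hfil : (p :: Q).filter (fun p => decide (p.1 ≠ u))
          = Q.filter (fun p => decide (p.1 ≠ u)) := by
        simp [List.filter_cons, hp]
      by_cases hc : p ∈ E ∧ ∀ q ∈ M, q.1 ≠ p.1 ∧ q.2 ≠ p.2
      · right
        have hup : ((u : L), p.2) = p := by rw [← hp]
        refine ⟨p.2, ?_, ?_⟩
        · rw [hup]; exact List.mem_cons_self
        · rw [hup]
          have hpin : p ∈ probeStep E M p := by
            unfold probeStep; rw [if_pos hc]; exact List.mem_cons_self
          exact mem_foldl_probe E Q hpin
      · have hstep : probeStep E M p = M := by unfold probeStep; rw [if_neg hc]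
        rw [List.foldl_cons, hstep, hfil]
        rcases ih M hM with h | ⟨x, hx1, hx2⟩
        · exact Or.inl h
        · exact Or.inr ⟨x, List.mem_cons_of_mem _ hx1, hx2⟩
    · have hfil : (p :: Q).filter (fun p => decide (p.1 ≠ u))
          = p :: Q.filter (fun p => decide (p.1 ≠ u)) := by
        simp [List.filter_cons, hp]
      have hM' : ∀ q ∈ probeStep E M p, q.1 ≠ u := by
        intro q hq
        rcases probeStep_cases E hq with rfl | hq'
        · exact hp
        · exact hM q hq'
      rw [List.foldl_cons, hfil, List.foldl_cons]
      rcases ih (probeStep E M p) hM' with h | ⟨x, hx1, hx2⟩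
      · exact Or.inl h
      · exact Or.inr ⟨x, List.mem_cons_of_mem _ hx1, hx2⟩

lemma filter_eq_takeWhile_of_sorted {α : Type*} (f : α → ℝ) (c : ℝ) :
    ∀ (Q : List α), Q.Pairwise (fun a b => f b ≤ f a) →
      Q.filter (fun p => decide (c < f p)) = Q.takeWhile (fun p => decide (c < f p)) := by
  intro Q
  induction Q with
  | nil => intro _; rfl
  | cons a Q ih =>
    intro hs
    rcases List.pairwise_cons.mp hs with ⟨ha, hQ⟩
    by_cases h : c < f a
    · rw [List.filter_cons, List.takeWhile_cons, if_pos (by simp [h]), if_pos (by simp [h]),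
        ih hQ]
    · rw [List.filter_cons, List.takeWhile_cons, if_neg (by simp [h]), if_neg (by simp [h])]
      apply List.filter_eq_nil_iff.mpr
      intro b hb
      simp only [decide_eq_true_eq]
      exact fun hcb => h (lt_of_lt_of_le hcb (ha b hb))

lemma takeWhile_prefix_of_false {α : Type*} (f : α → Bool) :
    ∀ (pre : List α) (a : α) (post : List α), f a = false →
      ((pre ++ a :: post).takeWhile f) <+: pre := by
  intro pre
  induction pre with
  | nil =>
    intro a post ha
    rw [List.nil_append, List.takeWhile_cons, ha]
    simp
  | cons b pre ih =>
    intro a post ha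
    rw [List.cons_append, List.takeWhile_cons]
    by_cases hb : f b = true
    · rw [if_pos hb]
      obtain ⟨d, hd⟩ := ih a post ha
      exact ⟨d, by rw [List.cons_append, hd]⟩
    · rw [if_neg hb]
      exact List.nil_prefix

lemma filter_orderedInsert_of_false {α : Type*} (r : α → α → Prop) [DecidableRel r]
    (f : α → Bool) (a : α) (ha : f a = false) :
    ∀ l : List α, (List.orderedInsert r a l).filter f = l.filter f := by
  intro l
  induction l with
  | nil => simp [List.orderedInsert, ha]
  | cons b l ih =>
    simp only [List.orderedInsert]
    split
    · rw [List.filter_cons, ha]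
      simp
    · simp only [List.filter_cons, ih]

lemma foldr_orderedInsert_perm {α β : Type*} (r : α → α → Prop) [DecidableRel r] (g : β → α) :
    ∀ (xs : List β) (l : List α),
      List.Perm (xs.foldr (fun x (acc : List α) => List.orderedInsert r (g x) acc) l) (xs.map g ++ l) := by
  intro xs
  induction xs with
  | nil => intro l; simp
  | cons x xs ih =>
    intro l
    simp only [List.foldr_cons, List.map_cons, List.cons_append]
    exact (List.perm_orderedInsert r _ _).trans ((ih l).cons _)

lemma foldr_orderedInsert_sorted {α β : Type*} (r : α → α → Prop) [DecidableRel r]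
    [IsTotal α r] [IsTrans α r] (g : β → α) :
    ∀ (xs : List β) (l : List α), l.Pairwise r →
      (xs.foldr (fun x (acc : List α) => List.orderedInsert r (g x) acc) l).Pairwise r := by
  intro xs
  induction xs with
  | nil => intro l h; exact h
  | cons x xs ih => intro l h; exact List.Pairwise.orderedInsert _ _ (ih l h)

lemma foldr_orderedInsert_filter {α β : Type*} (r : α → α → Prop) [DecidableRel r]
    (g : β → α) (f : α → Bool) (hg : ∀ x, f (g x) = false) :
    ∀ (xs : List β) (l : List α),
      (xs.foldr (fun x (acc : List α) => List.orderedInsert r (g x) acc) l).filter f = l.filter f := by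
  intro xs
  induction xs with
  | nil => intro l; rfl
  | cons x xs ih =>
    intro l
    simp only [List.foldr_cons]
    rw [filter_orderedInsert_of_false r f (g x) (hg x), ih]

end Aux

section PW

variable {L R : Type*}

lemma perturbedWeight_update_congr [DecidableEq L] (w : L → R → ℝ) (y : L → ℝ) (u : L)
    (a b : ℝ) {p : L × R} (hp : p.1 ≠ u) :
    perturbedWeight w (Function.update y u a) p = perturbedWeight w (Function.update y u b) p := by
  unfold perturbedWeight
  rw [Function.update_of_ne hp, Function.update_of_ne hp]

lemma perturbedWeight_nonneg {w : L → R → ℝ} (hw : ∀ a b, 0 ≤ w a b)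
    {y : L → ℝ} (hy : ∀ x, y x ≤ 1) (p : L × R) : 0 ≤ perturbedWeight w y p := by
  unfold perturbedWeight
  apply mul_nonneg _ (hw _ _)
  have h : Real.exp (y p.1 - 1) ≤ Real.exp 0 := Real.exp_le_exp.mpr (by linarith [hy p.1])
  rw [Real.exp_zero] at h
  linarith

lemma perturbedWeight_update_apply [DecidableEq L] (w : L → R → ℝ) (y : L → ℝ) (u : L)
    (s : ℝ) (x : R) :
    perturbedWeight w (Function.update y u s) (u, x) = (1 - Real.exp (s - 1)) * w u x := by
  unfold perturbedWeight
  rw [Function.update_self]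

end PW

section Main

variable {L R : Type*} [Fintype L] [Fintype R] [DecidableEq L] [DecidableEq R]

lemma matched_lt (w : L → R → ℝ) (E : Finset (L × R)) (u : L) (v : R) (y : L → ℝ) (θ : ℝ)
    (hmarginal : ∀ s ∈ Set.Icc (0:ℝ) 1, ∀ Q : List (L × R),
      IsProbeOrder w (Function.update y u s) Q →
      (w u v ≤ matchedWeight w (greedyMatching E Q) u ↔ s < θ))
    {s : ℝ} (hs : s ∈ Set.Icc (0:ℝ) 1) (hsθ : θ ≤ s)
    {Q : List (L × R)} (hQ : IsProbeOrder w (Function.update y u s) Q)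
    {x : R} (hx : (u, x) ∈ greedyMatching E Q) : w u x < w u v := by
  have hiff := hmarginal s hs Q hQ
  have hpw : (greedyMatching E Q).Pairwise (fun a b => a.1 ≠ b.1 ∧ a.2 ≠ b.2) :=
    pairwise_foldl_probe E Q List.Pairwise.nil
  have hfind : (greedyMatching E Q).find? (fun r => decide (r.1 = u)) = some (u, x) :=
    find?_fst_eq u _ hpw _ hx rfl
  have hmw : matchedWeight w (greedyMatching E Q) u = w u x := by
    unfold matchedWeight; rw [hfind]
  by_contra hle
  push_neg at hle
  exact absurd (hiff.mp (by rw [hmw]; exact hle)) (not_lt.mpr hsθ)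

lemma key_contra (w : L → R → ℝ) (E : Finset (L × R))
    (u : L) (v : R) (huv : (u, v) ∈ E)
    (y : L → ℝ) (θ : ℝ) (hθ : θ ∈ Set.Icc (0:ℝ) 1)
    (hmarginal : ∀ s ∈ Set.Icc (0:ℝ) 1, ∀ Q : List (L × R),
      IsProbeOrder w (Function.update y u s) Q →
      (w u v ≤ matchedWeight w (greedyMatching E Q) u ↔ s < θ))
    (s : ℝ) (hs0 : θ ≤ s) (hs1 : s ≤ 1)
    (N₁ : List (L × R)) (hnd : N₁.Nodup)
    (hsorted : N₁.Pairwise (fun p q => perturbedWeight w (Function.update y u s) q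
        ≤ perturbedWeight w (Function.update y u s) p))
    (hmem : ∀ p : L × R, p ∈ N₁ ↔ (p.1 ≠ u ∧
        perturbedWeight w (Function.update y u s) (u, v)
          < perturbedWeight w (Function.update y u s) p))
    (hvfree : ∀ q ∈ greedyMatching E N₁, q.2 ≠ v) : False := by
  classical
  have hfac : (0:ℝ) ≤ 1 - Real.exp (s - 1) := by
    have h := Real.exp_le_exp.mpr (show s - 1 ≤ 0 by linarith)
    rw [Real.exp_zero] at h; linarith
  set ys := Function.update y u s with hys
  set c := perturbedWeight w ys (u, v) with hcdef
  have hcval : ∀ x : R, perturbedWeight w ys (u, x) = (1 - Real.exp (s - 1)) * w u x := by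
    intro x; rw [hys]; exact perturbedWeight_update_apply w y u s x
  set r := fun p q : L × R => perturbedWeight w ys q ≤ perturbedWeight w ys p with hrdef
  haveI : DecidableRel r := fun a b => Real.decidableLE _ _
  haveI : IsTotal (L × R) r := ⟨fun a b => le_total _ _⟩
  haveI : IsTrans (L × R) r := ⟨fun a b c h1 h2 => le_trans h2 h1⟩
  set U : List R := (Finset.univ : Finset R).toList.filter
      (fun x : R => decide (c < perturbedWeight w ys (u, x))) with hUdef
  have hUnd : U.Nodup := List.Nodup.filter _ (Finset.nodup_toList _)
  have hUmem : ∀ x : R, x ∈ U ↔ c < perturbedWeight w ys (u, x) := by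
    intro x; rw [hUdef]; simp [List.mem_filter, Finset.mem_toList]
  set M₁ : List (L × R) := U.foldr (fun x acc => List.orderedInsert r (u, x) acc) N₁ with hM₁def
  have hperm : List.Perm M₁ (U.map (fun x => (u, x)) ++ N₁) := foldr_orderedInsert_perm r _ U N₁
  have hM₁mem : ∀ p : L × R, p ∈ M₁ ↔ (p ∈ U.map (fun x => (u, x)) ∨ p ∈ N₁) := by
    intro p; rw [hperm.mem_iff, List.mem_append]
  have hM₁sorted : M₁.Pairwise r := foldr_orderedInsert_sorted r _ U N₁ hsorted
  have hM₁nd : M₁.Nodup := by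
    rw [hperm.nodup_iff, List.nodup_append]
    refine ⟨List.Nodup.map (fun a b hab => by simpa using hab) hUnd, hnd, ?_⟩
    intro p hp1 _ hp2 rfl
    rcases List.mem_map.mp hp1 with ⟨x, _, rfl⟩
    exact ((hmem _).mp hp2).1 rfl
  have hM₁big : ∀ p ∈ M₁, c < perturbedWeight w ys p := by
    intro p hp
    rcases (hM₁mem p).mp hp with h | h
    · rcases List.mem_map.mp h with ⟨x, hx, rfl⟩
      exact (hUmem x).mp hx
    · exact ((hmem p).mp h).2
  have huvM₁ : (u, v) ∉ M₁ := fun h => absurd (hM₁big _ h) (lt_irrefl c)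
  have hM₁filter : M₁.filter (fun p => decide (p.1 ≠ u)) = N₁ := by
    rw [hM₁def, foldr_orderedInsert_filter r _ _ (fun x => by simp)]
    exact List.filter_eq_self.mpr (fun p hp => by simp [((hmem p).mp hp).1])
  set rest : List (L × R) := List.insertionSort r ((Finset.univ : Finset (L × R)).toList.filter
      (fun p => decide (p ∉ M₁) && decide (p ≠ (u, v)))) with hrestdef
  have hrestmem : ∀ p : L × R, p ∈ rest ↔ (p ∉ M₁ ∧ p ≠ (u, v)) := by
    intro p
    rw [hrestdef, (List.perm_insertionSort r _).mem_iff]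
    simp [List.mem_filter, Finset.mem_toList]
  have hrestsorted : rest.Pairwise r := by rw [hrestdef]; exact List.pairwise_insertionSort r _
  have hrestnd : rest.Nodup := by
    rw [hrestdef, (List.perm_insertionSort r _).nodup_iff]
    exact List.Nodup.filter _ (Finset.nodup_toList _)
  have hrestsmall : ∀ p ∈ rest, perturbedWeight w ys p ≤ c := by
    intro p hp
    rcases (hrestmem p).mp hp with ⟨hpM, hpuv⟩
    by_contra hgt
    push_neg at hgt
    by_cases hpu : p.1 = u
    · apply hpM
      rw [hM₁mem p]
      left
      refine List.mem_map.mpr ⟨p.2, ?_, ?_⟩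
      · rw [hUmem]
        rw [show ((u : L), p.2) = p from by rw [← hpu]]
        exact hgt
      · rw [← hpu]
    · exact hpM ((hM₁mem p).mpr (Or.inr ((hmem p).mpr ⟨hpu, hgt⟩)))
  set Q' : List (L × R) := M₁ ++ (u, v) :: rest with hQ'def
  have hQ'nodup : Q'.Nodup := by
    rw [hQ'def, List.nodup_append]
    refine ⟨hM₁nd, ?_, ?_⟩
    · rw [List.nodup_cons]
      exact ⟨fun h => ((hrestmem _).mp h).2 rfl, hrestnd⟩
    · intro p hp1 _ hp2 rfl
      rcases List.mem_cons.mp hp2 with rfl | hp2'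
      · exact huvM₁ hp1
      · exact ((hrestmem p).mp hp2').1 hp1
  have hQ'mem : ∀ p : L × R, p ∈ Q' := by
    intro p
    rw [hQ'def, List.mem_append, List.mem_cons]
    by_cases h1 : p ∈ M₁
    · exact Or.inl h1
    · by_cases h2 : p = (u, v)
      · exact Or.inr (Or.inl h2)
      · exact Or.inr (Or.inr ((hrestmem p).mpr ⟨h1, h2⟩))
  have hQ'sorted : Q'.Pairwise r := by
    rw [hQ'def]
    show List.Pairwise r (M₁ ++ (u, v) :: rest)
    rw [List.pairwise_append]
    refine ⟨hM₁sorted, ?_, ?_⟩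
    · rw [List.pairwise_cons]
      refine ⟨fun b hb => ?_, hrestsorted⟩
      show perturbedWeight w ys b ≤ perturbedWeight w ys (u, v)
      rw [← hcdef]
      exact hrestsmall b hb
    · intro a ha b hb
      have hbc : perturbedWeight w ys b ≤ c := by
        rcases List.mem_cons.mp hb with rfl | hb'
        · rw [← hcdef]
        · exact hrestsmall b hb'
      exact le_trans hbc (le_of_lt (hM₁big a ha))
  have hQ'order : IsProbeOrder w (Function.update y u s) Q' := by
    rw [← hys]
    exact ⟨hQ'nodup, hQ'mem, by rw [hrdef] at hQ'sorted; exact hQ'sorted⟩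
  rcases foldl_probe_filter E u M₁ [] (by intro q hq; cases hq) with hleft | ⟨x, hxM, hxg⟩
  · have hg₁ : M₁.foldl (probeStep E) [] = greedyMatching E N₁ := by
      rw [hleft, hM₁filter]; rfl
    have hufree : ∀ q ∈ M₁.foldl (probeStep E) [], q.1 ≠ u := by
      intro q hq
      rw [hg₁] at hq
      rcases mem_of_mem_foldl E N₁ hq with h | h
      · cases h
      · exact ((hmem q).mp h).1
    have hvfree' : ∀ q ∈ M₁.foldl (probeStep E) [], q.2 ≠ v := by
      intro q hq; rw [hg₁] at hq; exact hvfree q hq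
    have hcond : (u, v) ∈ E ∧ ∀ q ∈ M₁.foldl (probeStep E) [],
        q.1 ≠ (u, v).1 ∧ q.2 ≠ (u, v).2 :=
      ⟨huv, fun q hq => ⟨hufree q hq, hvfree' q hq⟩⟩
    have hin : (u, v) ∈ greedyMatching E Q' := by
      show (u, v) ∈ Q'.foldl (probeStep E) []
      rw [hQ'def, List.foldl_append, List.foldl_cons]
      exact mem_foldl_probe E rest (probeStep_mem_self E hcond)
    exact absurd (matched_lt w E u v y θ hmarginal ⟨le_trans hθ.1 hs0, hs1⟩ hs0 hQ'order hin)
      (lt_irrefl _)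
  · have hxc : c < perturbedWeight w ys (u, x) := by
      rcases (hM₁mem _).mp hxM with h | h
      · rcases List.mem_map.mp h with ⟨x', hx', hx'eq⟩
        have hxx : x' = x := by simpa using hx'eq
        subst hxx
        exact (hUmem _).mp hx'
      · exact absurd rfl ((hmem _).mp h).1
    have hin : (u, x) ∈ greedyMatching E Q' := by
      show (u, x) ∈ Q'.foldl (probeStep E) []
      rw [hQ'def, List.foldl_append, List.foldl_cons]
      exact mem_foldl_probe E rest (mem_probeStep E _ hxg)
    have hlt := matched_lt w E u v y θ hmarginal ⟨le_trans hθ.1 hs0, hs1⟩ hs0 hQ'order hin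
    have h1 : perturbedWeight w ys (u, x) ≤ c := by
      rw [hcval x, hcdef, hcval v]
      exact mul_le_mul_of_nonneg_left hlt.le hfac
    exact absurd hxc (not_lt.mpr h1)

lemma part2 (w : L → R → ℝ) (hw : ∀ a b, 0 ≤ w a b) (E : Finset (L × R))
    (u : L) (v : R) (huv : (u, v) ∈ E)
    (y : L → ℝ) (hy : ∀ x, y x ∈ Set.Icc (0:ℝ) 1)
    (θ : ℝ) (hθ : θ ∈ Set.Icc (0:ℝ) 1)
    (hmarginal : ∀ s ∈ Set.Icc (0:ℝ) 1, ∀ Q : List (L × R),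
      IsProbeOrder w (Function.update y u s) Q →
      (w u v ≤ matchedWeight w (greedyMatching E Q) u ↔ s < θ))
    (t : ℝ) (ht : t ∈ Set.Icc θ 1)
    (P : List (L × R)) (hP : IsProbeOrder w (Function.update y u t) P)
    (hwuv : 0 < w u v)
    (q₀ : L × R) (hq₀M : q₀ ∈ greedyMatching E P) (hq₀v : q₀.2 = v)
    (hq₀pw : perturbedWeight w (Function.update y u t) (u, v)
      ≤ perturbedWeight w (Function.update y u t) q₀) :
    (1 - Real.exp (θ - 1)) * w u v ≤ perturbedWeight w (Function.update y u t) q₀ := by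
  classical
  set y' := Function.update y u t with hy'
  have hnd := hP.1
  have hall := hP.2.1
  have hsort : P.Pairwise (fun p q => perturbedWeight w y' q ≤ perturbedWeight w y' p) := hP.2.2
  have hy'le : ∀ z : L, y' z ≤ 1 := by
    intro z
    rw [hy']
    by_cases hz : z = u
    · subst hz; rw [Function.update_self]; exact ht.2
    · rw [Function.update_of_ne hz]; exact (hy z).2
  by_contra hA
  push_neg at hA
  set A := perturbedWeight w y' q₀ with hAdef
  have hA0 : 0 ≤ A := perturbedWeight_nonneg hw hy'le q₀
  have hdivlt : A / w u v < 1 - Real.exp (θ - 1) := (div_lt_iff₀ hwuv).mpr (by nlinarith)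
  have hpos : 0 < 1 - A / w u v := by linarith [Real.exp_pos (θ - 1)]
  set s' := 1 + Real.log (1 - A / w u v) with hs'def
  have hexp : Real.exp (s' - 1) = 1 - A / w u v := by
    rw [hs'def, show (1 + Real.log (1 - A / w u v)) - 1 = Real.log (1 - A / w u v) by ring]
    exact Real.exp_log hpos
  have hs'θ : θ ≤ s' := by
    by_contra h
    push_neg at h
    have h2 := Real.exp_lt_exp.mpr (show s' - 1 < θ - 1 by linarith)
    rw [hexp] at h2
    linarith
  have hs'1 : s' ≤ 1 := by
    have h1 : 1 - A / w u v ≤ 1 := by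
      have := div_nonneg hA0 hwuv.le
      linarith
    have h2 := Real.log_nonpos (by linarith) h1
    rw [hs'def]; linarith
  have hcA : perturbedWeight w (Function.update y u s') (u, v) = A := by
    rw [perturbedWeight_update_apply, hexp]
    field_simp
    ring
  -- split P at q₀
  have hq₀P : q₀ ∈ P := by
    rcases mem_of_mem_foldl E P hq₀M with h | h
    · cases h
    · exact h
  obtain ⟨pre, post, hsplit⟩ := List.append_of_mem hq₀P
  have hndP := hnd
  rw [hsplit] at hndP
  obtain ⟨hndpre, hndcons, hdisj⟩ := List.nodup_append.mp hndP
  have hq₀pre : q₀ ∉ pre := fun h => hdisj q₀ h q₀ (List.mem_cons_self) rfl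
  have hq₀post : q₀ ∉ post := (List.nodup_cons.mp hndcons).1
  have hvfreepre : ∀ rr ∈ pre.foldl (probeStep E) [], rr.2 ≠ v := by
    by_contra h
    push_neg at h
    obtain ⟨rr, hr, hrv⟩ := h
    have hfail : probeStep E (pre.foldl (probeStep E) []) q₀ = pre.foldl (probeStep E) [] := by
      unfold probeStep
      rw [if_neg]
      rintro ⟨-, hforall⟩
      exact (hforall rr hr).2 (hrv.trans hq₀v.symm)
    have hq₀in : q₀ ∈ (q₀ :: post).foldl (probeStep E) (pre.foldl (probeStep E) []) := by
      have h2 : q₀ ∈ P.foldl (probeStep E) [] := hq₀M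
      rw [hsplit, List.foldl_append] at h2
      exact h2
    rw [List.foldl_cons, hfail] at hq₀in
    rcases mem_of_mem_foldl E post hq₀in with h' | h'
    · rcases mem_of_mem_foldl E pre h' with h'' | h''
      · cases h''
      · exact hq₀pre h''
    · exact hq₀post h'
  set T := P.takeWhile (fun p => decide (A < perturbedWeight w y' p)) with hTdef
  have hTfil : P.filter (fun p => decide (A < perturbedWeight w y' p)) = T := by
    rw [hTdef]
    exact filter_eq_takeWhile_of_sorted (perturbedWeight w y') A P hsort
  have hTmem : ∀ p : L × R, p ∈ T ↔ A < perturbedWeight w y' p := by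
    intro p
    rw [← hTfil, List.mem_filter]
    simp [hall p]
  have hTpre : T <+: pre := by
    rw [hTdef, hsplit]
    exact takeWhile_prefix_of_false _ pre q₀ post (by simp [hAdef])
  have hTP : T <+: P := by rw [hTdef]; exact List.takeWhile_prefix _
  have hTsub : ∀ q ∈ T.foldl (probeStep E) [], q ∈ greedyMatching E P := by
    intro q hq
    obtain ⟨d, hd⟩ := hTP
    show q ∈ P.foldl (probeStep E) []
    rw [← hd, List.foldl_append]
    exact mem_foldl_probe E _ hq
  have hvfreeT : ∀ q ∈ T.foldl (probeStep E) [], q.2 ≠ v := by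
    intro q hq
    obtain ⟨d, hd⟩ := hTpre
    apply hvfreepre
    rw [← hd, List.foldl_append]
    exact mem_foldl_probe E _ hq
  rcases foldl_probe_filter E u T [] (by intro q hq; cases hq) with hleft | ⟨x, hxT, hxg⟩
  · have hndT : T.Nodup := List.Nodup.sublist hTP.sublist hnd
    have hsortT : T.Pairwise (fun p q => perturbedWeight w y' q ≤ perturbedWeight w y' p) :=
      List.Pairwise.sublist hTP.sublist hsort
    refine key_contra w E u v huv y θ hθ hmarginal s' hs'θ hs'1
      (T.filter (fun p => decide (p.1 ≠ u))) (List.Nodup.filter _ hndT) ?_ ?_ ?_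
    · refine List.Pairwise.imp_of_mem ?_ (List.Pairwise.filter _ hsortT)
      intro a b ha hb hab
      have ha' : a.1 ≠ u := by simpa using (List.mem_filter.mp ha).2
      have hb' : b.1 ≠ u := by simpa using (List.mem_filter.mp hb).2
      have e1 : perturbedWeight w (Function.update y u s') a = perturbedWeight w y' a := by
        rw [hy']; exact perturbedWeight_update_congr w y u s' t ha'
      have e2 : perturbedWeight w (Function.update y u s') b = perturbedWeight w y' b := by
        rw [hy']; exact perturbedWeight_update_congr w y u s' t hb'
      rw [e1, e2]; exact hab
    · intro p
      rw [List.mem_filter]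
      constructor
      · rintro ⟨hpT, hpu⟩
        have hpu' : p.1 ≠ u := by simpa using hpu
        refine ⟨hpu', ?_⟩
        rw [hcA]
        have h2 := (hTmem p).mp hpT
        have e1 : perturbedWeight w (Function.update y u s') p = perturbedWeight w y' p := by
          rw [hy']; exact perturbedWeight_update_congr w y u s' t hpu'
        rw [e1]; exact h2
      · rintro ⟨hpu, hplt⟩
        rw [hcA] at hplt
        have e1 : perturbedWeight w (Function.update y u s') p = perturbedWeight w y' p := by
          rw [hy']; exact perturbedWeight_update_congr w y u s' t hpu
        rw [e1] at hplt
        exact ⟨(hTmem p).mpr hplt, by simpa using hpu⟩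
    · intro q hq
      apply hvfreeT q
      rw [hleft]
      exact hq
  · have hxA : A < perturbedWeight w y' (u, x) := by
      have h2 := List.mem_takeWhile_imp (hTdef ▸ hxT)
      simpa using h2
    have hin : (u, x) ∈ greedyMatching E P := hTsub _ hxg
    have hlt := matched_lt w E u v y θ hmarginal ⟨le_trans hθ.1 ht.1, ht.2⟩ ht.1 (by rw [← hy']; exact hP) hin
    have e1 : perturbedWeight w y' (u, x) = (1 - Real.exp (t - 1)) * w u x := by
      rw [hy']; exact perturbedWeight_update_apply w y u t x
    have e2 : perturbedWeight w y' (u, v) = (1 - Real.exp (t - 1)) * w u v := by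
      rw [hy']; exact perturbedWeight_update_apply w y u t v
    have hfac : (0:ℝ) ≤ 1 - Real.exp (t - 1) := by
      have h := Real.exp_le_exp.mpr (show t - 1 ≤ 0 by linarith [ht.2])
      rw [Real.exp_zero] at h; linarith
    rw [e1] at hxA
    rw [e2] at hq₀pw
    have h3 := mul_le_mul_of_nonneg_left hlt.le hfac
    linarith

end Main

/-- Second half of Lemma 3: fix an edge `(u, v) ∈ E` with marginal rank `θ` and the ranks
of all left vertices other than `u`. If `y_u ∈ [θ, 1]` then `v` is matched and its gain
satisfies `α_v ≥ (1 - g(θ)) · w u v`, where `g(t) = e^{t-1}`. -/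
theorem stmt_12 {L R : Type*} [Fintype L] [Fintype R] [DecidableEq L] [DecidableEq R]
    (w : L → R → ℝ) (hw : ∀ a b, 0 ≤ w a b) (E : Finset (L × R))
    (u : L) (v : R) (huv : (u, v) ∈ E)
    (y : L → ℝ) (hy : ∀ x, y x ∈ Set.Icc (0:ℝ) 1)
    (θ : ℝ) (hθ : θ ∈ Set.Icc (0:ℝ) 1)
    (hmarginal : ∀ s ∈ Set.Icc (0:ℝ) 1, ∀ Q : List (L × R),
      IsProbeOrder w (Function.update y u s) Q →
      (w u v ≤ matchedWeight w (greedyMatching E Q) u ↔ s < θ))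
    (t : ℝ) (ht : t ∈ Set.Icc θ 1)
    (P : List (L × R)) (hP : IsProbeOrder w (Function.update y u t) P) :
    (∃ q ∈ greedyMatching E P, q.2 = v) ∧
      (1 - Real.exp (θ - 1)) * w u v ≤
        gainR w (Function.update y u t) (greedyMatching E P) v := by
  classical
  have ht0 : (0:ℝ) ≤ t := le_trans hθ.1 ht.1
  set y' := Function.update y u t with hy'
  have hnd := hP.1
  have hall := hP.2.1
  have hsort : P.Pairwise (fun p q => perturbedWeight w y' q ≤ perturbedWeight w y' p) := hP.2.2
  have hfac : (0:ℝ) ≤ 1 - Real.exp (t - 1) := by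
    have h := Real.exp_le_exp.mpr (show t - 1 ≤ 0 by linarith [ht.2])
    rw [Real.exp_zero] at h; linarith
  have hpwuv : perturbedWeight w y' (u, v) = (1 - Real.exp (t - 1)) * w u v := by
    rw [hy']; exact perturbedWeight_update_apply w y u t v
  have hmwnn : 0 ≤ matchedWeight w (greedyMatching E P) u := by
    unfold matchedWeight
    cases hfind : (greedyMatching E P).find? (fun q => decide (q.1 = u)) with
    | none => exact le_refl 0
    | some q => exact hw q.1 q.2
  have hmwlt : matchedWeight w (greedyMatching E P) u < w u v := by
    have hiff := hmarginal t ⟨ht0, ht.2⟩ P (by rw [← hy']; exact hP)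
    by_contra h
    push_neg at h
    exact absurd (hiff.mp h) (not_lt.mpr ht.1)
  have hwuv : 0 < w u v := lt_of_le_of_lt hmwnn hmwlt
  -- split P at (u, v)
  obtain ⟨pre, post, hsplit⟩ := List.append_of_mem (hall (u, v))
  have hSsub : ∀ q ∈ pre.foldl (probeStep E) [], q ∈ greedyMatching E P := by
    intro q hq
    show q ∈ P.foldl (probeStep E) []
    rw [hsplit, List.foldl_append]
    exact mem_foldl_probe E _ hq
  have hprepw : ∀ q ∈ pre, perturbedWeight w y' (u, v) ≤ perturbedWeight w y' q := by
    have h := hsort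
    rw [hsplit] at h
    have h2 := (List.pairwise_append.mp h).2.2
    intro q hq
    exact h2 q hq (u, v) (List.mem_cons_self)
  -- produce a matched partner of v
  have hpart1 : ∃ q₀, q₀ ∈ greedyMatching E P ∧ q₀.2 = v ∧
      perturbedWeight w y' (u, v) ≤ perturbedWeight w y' q₀ := by
    by_cases hvS : ∃ rr ∈ pre.foldl (probeStep E) [], rr.2 = v
    · obtain ⟨q₀, hq₀S, hq₀v⟩ := hvS
      have hq₀pre : q₀ ∈ pre := by
        rcases mem_of_mem_foldl E pre hq₀S with h | h
        · cases h
        · exact h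
      exact ⟨q₀, hSsub q₀ hq₀S, hq₀v, hprepw q₀ hq₀pre⟩
    · exfalso
      push_neg at hvS
      by_cases huS : ∃ rr ∈ pre.foldl (probeStep E) [], rr.1 = u
      · -- u already matched before (u,v) was probed: forces 1 - e^{t-1} = 0
        obtain ⟨rr, hrS, hru⟩ := huS
        have hrpre : rr ∈ pre := by
          rcases mem_of_mem_foldl E pre hrS with h | h
          · cases h
          · exact h
        have hrM : rr ∈ greedyMatching E P := hSsub rr hrS
        have hrM' : ((u : L), rr.2) ∈ greedyMatching E P := by
          rw [show ((u : L), rr.2) = rr from by rw [← hru]]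
          exact hrM
        have hlt := matched_lt w E u v y θ hmarginal ⟨ht0, ht.2⟩ ht.1 (by rw [← hy']; exact hP) hrM'
        have hrw : perturbedWeight w y' rr = (1 - Real.exp (t - 1)) * w u rr.2 := by
          unfold perturbedWeight
          rw [hru, hy', Function.update_self]
        have hge : perturbedWeight w y' (u, v) ≤ perturbedWeight w y' rr := hprepw rr hrpre
        have hfaceq : 1 - Real.exp (t - 1) = 0 := by
          rcases lt_or_eq_of_le hfac with h | h
          · exfalso
            rw [hrw, hpwuv] at hge
            have h2 := le_of_mul_le_mul_left hge h
            linarith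
          · exact h.symm
        have hpwuv0 : perturbedWeight w y' (u, v) = 0 := by
          rw [hpwuv, hfaceq, zero_mul]
        set T := P.takeWhile (fun p => decide ((0:ℝ) < perturbedWeight w y' p)) with hTdef
        have hTfil : P.filter (fun p => decide ((0:ℝ) < perturbedWeight w y' p)) = T := by
          rw [hTdef]
          exact filter_eq_takeWhile_of_sorted (perturbedWeight w y') 0 P hsort
        have hTmem : ∀ p : L × R, p ∈ T ↔ (0:ℝ) < perturbedWeight w y' p := by
          intro p
          rw [← hTfil, List.mem_filter]
          simp [hall p]
        have hTpre : T <+: pre := by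
          rw [hTdef, hsplit]
          exact takeWhile_prefix_of_false _ pre (u, v) post (by simp [hpwuv0])
        have hTP : T <+: P := by rw [hTdef]; exact List.takeWhile_prefix _
        have hndT : T.Nodup := List.Nodup.sublist hTP.sublist hnd
        have hsortT : T.Pairwise (fun p q => perturbedWeight w y' q ≤ perturbedWeight w y' p) :=
          List.Pairwise.sublist hTP.sublist hsort
        have hvfreeT : ∀ q ∈ T.foldl (probeStep E) [], q.2 ≠ v := by
          intro q hq
          obtain ⟨d, hd⟩ := hTpre
          apply hvS
          rw [← hd, List.foldl_append]
          exact mem_foldl_probe E _ hq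
        rcases foldl_probe_filter E u T [] (by intro q hq; cases hq) with hleft | ⟨x, hxT, hxg⟩
        · refine key_contra w E u v huv y θ hθ hmarginal 1 hθ.2 le_rfl
            (T.filter (fun p => decide (p.1 ≠ u))) (List.Nodup.filter _ hndT) ?_ ?_ ?_
          · refine List.Pairwise.imp_of_mem ?_ (List.Pairwise.filter _ hsortT)
            intro a b ha hb hab
            have ha' : a.1 ≠ u := by simpa using (List.mem_filter.mp ha).2
            have hb' : b.1 ≠ u := by simpa using (List.mem_filter.mp hb).2
            have e1 : perturbedWeight w (Function.update y u 1) a = perturbedWeight w y' a := by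
              rw [hy']; exact perturbedWeight_update_congr w y u 1 t ha'
            have e2 : perturbedWeight w (Function.update y u 1) b = perturbedWeight w y' b := by
              rw [hy']; exact perturbedWeight_update_congr w y u 1 t hb'
            rw [e1, e2]; exact hab
          · intro p
            rw [List.mem_filter]
            have hc1 : perturbedWeight w (Function.update y u 1) (u, v) = 0 := by
              rw [perturbedWeight_update_apply]
              norm_num
            constructor
            · rintro ⟨hpT, hpu⟩
              have hpu' : p.1 ≠ u := by simpa using hpu
              refine ⟨hpu', ?_⟩
              rw [hc1]
              have h2 := (hTmem p).mp hpT
              have e1 : perturbedWeight w (Function.update y u 1) p = perturbedWeight w y' p := by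
                rw [hy']; exact perturbedWeight_update_congr w y u 1 t hpu'
              rw [e1]; exact h2
            · rintro ⟨hpu, hplt⟩
              rw [hc1] at hplt
              have e1 : perturbedWeight w (Function.update y u 1) p = perturbedWeight w y' p := by
                rw [hy']; exact perturbedWeight_update_congr w y u 1 t hpu
              rw [e1] at hplt
              exact ⟨(hTmem p).mpr hplt, by simpa using hpu⟩
          · intro q hq
            apply hvfreeT q
            rw [hleft]
            exact hq
        · have h0 := (hTmem _).mp hxT
          have hzero : perturbedWeight w y' (u, x) = 0 := by
            rw [hy', perturbedWeight_update_apply, hfaceq, zero_mul]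
          rw [hzero] at h0
          exact absurd h0 (lt_irrefl 0)
      · -- both endpoints free when (u,v) is probed: (u,v) gets matched, contradiction
        push_neg at huS
        have hcond : (u, v) ∈ E ∧ ∀ q ∈ pre.foldl (probeStep E) [],
            q.1 ≠ (u, v).1 ∧ q.2 ≠ (u, v).2 :=
          ⟨huv, fun q hq => ⟨huS q hq, hvS q hq⟩⟩
        have hin : (u, v) ∈ greedyMatching E P := by
          show (u, v) ∈ P.foldl (probeStep E) []
          rw [hsplit, List.foldl_append, List.foldl_cons]
          exact mem_foldl_probe E post (probeStep_mem_self E hcond)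
        exact absurd (matched_lt w E u v y θ hmarginal ⟨ht0, ht.2⟩ ht.1 (by rw [← hy']; exact hP) hin) (lt_irrefl _)
  obtain ⟨q₀, hq₀M, hq₀v, hq₀pw⟩ := hpart1
  have hbound := part2 w hw E u v huv y hy θ hθ hmarginal t ht P (by rw [← hy']; exact hP) hwuv
      q₀ hq₀M hq₀v (by rw [← hy']; exact hq₀pw)
  refine ⟨⟨q₀, hq₀M, hq₀v⟩, ?_⟩
  have hpw2 : (greedyMatching E P).Pairwise (fun a b => a.1 ≠ b.1 ∧ a.2 ≠ b.2) :=
    pairwise_foldl_probe E P List.Pairwise.nil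
  have hfind : (greedyMatching E P).find? (fun q => decide (q.2 = v)) = some q₀ :=
    find?_snd_eq v _ hpw2 _ hq₀M hq₀v
  have hgain : gainR w y' (greedyMatching E P) v = perturbedWeight w y' q₀ := by
    unfold gainR
    rw [hfind]
    rfl
  rw [hgain]
  rw [hy']
  exact hbound
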